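/- Define J_{n:m} : ℂ× × ℂ× → ℝ³ by J_{n:m}(a) = (Re(w), Im(w), (|a₁|²/m − |a₂|²/n)/2) where w = a₁^m·conj(a₂)^n/(√(nm)·|a₁|^{m-1}·|a₂|^{n-1}). Then μ₁² + μ₂² + μ₃² = R_{n:m}(a)² where (μ₁,μ₂,μ₃) = J_{n:m}(a) and R_{n:m}(a) = (|a₁|²/m + |a₂|²/n)/2. In particular, the image of each level set R_{n:m}^{-1}(r), r > 0, under J_{n:m} lies on the sphere of radius r. -/

import Mathlib

/-- `J_{n:m}` viewed as a map to ℝ³. -/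
noncomputable def Jnm (n m : ℕ) (a : ℂ × ℂ) : ℝ × ℝ × ℝ :=
  let w : ℂ := a.1 ^ m * ((starRingEnd ℂ) a.2) ^ n
    / ((Real.sqrt (n * m) : ℂ) * (‖a.1‖ : ℂ) ^ (m - 1)
        * (‖a.2‖ : ℂ) ^ (n - 1))
  (w.re, w.im, (‖a.1‖ ^ 2 / m - ‖a.2‖ ^ 2 / n) / 2)

/-- `R_{n:m}`. -/
noncomputable def Rnm (n m : ℕ) (a : ℂ × ℂ) : ℝ :=
  (‖a.1‖ ^ 2 / m + ‖a.2‖ ^ 2 / n) / 2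

theorem stmt_10 (n m : ℕ) (hn : 1 ≤ n) (hm : 1 ≤ m)
    (a : ℂ × ℂ) (h₁ : a.1 ≠ 0) (h₂ : a.2 ≠ 0) :
    ((Jnm n m a).1 ^ 2 + (Jnm n m a).2.1 ^ 2 + (Jnm n m a).2.2 ^ 2 = Rnm n m a ^ 2) ∧
    (∀ r : ℝ, 0 < r → Rnm n m a = r →
      Real.sqrt ((Jnm n m a).1 ^ 2 + (Jnm n m a).2.1 ^ 2 + (Jnm n m a).2.2 ^ 2) = r) := by
  set α := ‖a.1‖ with hαdef
  set β := ‖a.2‖ with hβdef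
  have hα : (0:ℝ) < α := norm_pos_iff.mpr h₁
  have hβ : (0:ℝ) < β := norm_pos_iff.mpr h₂
  have hn0 : (0:ℝ) < (n:ℝ) := by exact_mod_cast hn
  have hm0 : (0:ℝ) < (m:ℝ) := by exact_mod_cast hm
  set w : ℂ := a.1 ^ m * ((starRingEnd ℂ) a.2) ^ n
    / ((Real.sqrt (n * m) : ℂ) * (α : ℂ) ^ (m - 1) * (β : ℂ) ^ (n - 1)) with hw
  have hsq : Real.sqrt ((n:ℝ) * m) ^ 2 = n * m := by
    rw [Real.sq_sqrt (by positivity)]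
  have habs : ‖w‖ = α ^ m * β ^ n / (Real.sqrt (n * m) * α ^ (m - 1) * β ^ (n - 1)) := by
    rw [hw, norm_div, norm_mul, norm_mul, norm_mul, norm_pow, norm_pow, norm_pow, norm_pow,
      Complex.norm_real, Complex.norm_real, Complex.norm_real, Real.norm_eq_abs, Real.norm_eq_abs,
      Real.norm_eq_abs, Complex.norm_conj,
      abs_of_nonneg (Real.sqrt_nonneg _), abs_of_nonneg hα.le, abs_of_nonneg hβ.le]
  have key : w.re ^ 2 + w.im ^ 2 = α ^ 2 * β ^ 2 / (n * m) := by
    have h1 : w.re ^ 2 + w.im ^ 2 = ‖w‖ ^ 2 := by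
      rw [Complex.sq_norm, Complex.normSq_apply]; ring
    rw [h1, habs, div_pow, mul_pow, mul_pow, mul_pow, hsq]
    have hm1 : α ^ m = α ^ (m-1) * α := by
      conv_lhs => rw [show m = (m-1) + 1 by omega, pow_succ]
    have hn1 : β ^ n = β ^ (n-1) * β := by
      conv_lhs => rw [show n = (n-1) + 1 by omega, pow_succ]
    rw [hm1, hn1]
    have hαm : (α:ℝ) ^ (m-1) ≠ 0 := by positivity
    have hβn : (β:ℝ) ^ (n-1) ≠ 0 := by positivity
    field_simp
  have main : (Jnm n m a).1 ^ 2 + (Jnm n m a).2.1 ^ 2 + (Jnm n m a).2.2 ^ 2 = Rnm n m a ^ 2 := by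
    show w.re ^ 2 + w.im ^ 2 + ((α ^ 2 / m - β ^ 2 / n) / 2) ^ 2 = ((α ^ 2 / m + β ^ 2 / n) / 2) ^ 2
    rw [key]
    field_simp
    ring
  refine ⟨main, fun r hr hR => ?_⟩
  rw [main, hR, Real.sqrt_sq hr.le]
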